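/- arXiv:1401.3073 — 5 statements merged into one kernel-verified Lean document; each statement's English description precedes it below -/
import Mathlib

section
/- Fix a nonnegative integer k. For l ≥ 0 and r > k + l, the double theta polynomials satisfy ϑ_r^{(l)}·ϑ_r^{(l)} + 2∑_{j=1}^r (-1)^j ϑ_{r+j}^{(l)}·ϑ_{r-j}^{(l)} = 0. For l ≥ 0 and r ≤ k + l, this quantity equals ∑_{s=0}^r e_s(z_1²,...,z_k²) e_{r-s}(t_1²,...,t_l²), where e_s denotes the elementary symmetric polynomial. -/
/-!
Statement 1: Fix `k ≥ 0`.  For `l ≥ 0` and `r > k + l` the double theta polynomials satisfy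
`ϑ_r^{(l)}·ϑ_r^{(l)} + 2∑_{j=1}^r (-1)^j ϑ_{r+j}^{(l)}·ϑ_{r-j}^{(l)} = 0`, while for
`r ≤ k + l` this quantity equals `∑_{s=0}^r e_s(z_1²,…,z_k²) e_{r-s}(t_1²,…,t_l²)`.

The double theta polynomial `_kϑ_r^{(l)}(x,z|t)` is the coefficient of `u^r` in
`∏_{i≥1} (1+x_i u)/(1-x_i u) · ∏_{i=1}^k (1+z_i u) · ∏_{i=1}^l (1-t_i u)` (with the last factor
replaced by `∏ (1+t_i u)⁻¹` for negative superscript), and `ϑ_r^{(l)} = 0` for `r < 0`.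
An identity of such symmetric functions holds iff it holds for every specialization, in every
commutative ring, of the `x`-variables in which only `x_1, …, x_N` are nonzero; we state the
identity universally over the ring, over `N`, and over the values of the variables
(`x i`, `z i`, `t i` standing for `x_{i+1}`, `z_{i+1}`, `t_{i+1}`). -/

open Finset

noncomputable section

variable {R : Type*} [CommRing R]

/-- The power series `(1 - a u)⁻¹ = ∑_n aⁿ uⁿ`. -/
def geomSeries (a : R) : PowerSeries R := PowerSeries.mk fun n => a ^ n

/-- The generating function `f_l(u)` of the double theta polynomials `_kϑ_r^{(l)}`,
with `N` of the `x`-variables. -/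
def thetaGF (k N : ℕ) (x z t : ℕ → R) (l : ℤ) : PowerSeries R :=
  (∏ i ∈ range N, ((1 + PowerSeries.C (x i) * PowerSeries.X) * geomSeries (x i))) *
    (∏ i ∈ range k, (1 + PowerSeries.C (z i) * PowerSeries.X)) *
    (if 0 ≤ l then ∏ i ∈ range l.toNat, (1 - PowerSeries.C (t i) * PowerSeries.X)
     else ∏ i ∈ range (-l).toNat, geomSeries (-(t i)))

/-- The double theta polynomial `_kϑ_r^{(l)}(x,z|t)`; it vanishes for `r < 0`. -/
def theta (k N : ℕ) (x z t : ℕ → R) (l r : ℤ) : R :=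
  if r < 0 then 0 else PowerSeries.coeff r.toNat (thetaGF k N x z t l)

/-- The elementary symmetric polynomial `e_s` evaluated at `f 0, …, f (m-1)`. -/
def esymVal (m s : ℕ) (f : ℕ → R) : R :=
  ∑ A ∈ (range m).powersetCard s, ∏ i ∈ A, f i

/-! ### Auxiliary lemmas -/

open PowerSeries in
lemma geom_mul (a : R) : geomSeries a * (1 - C a * X) = 1 := by
  ext n
  rw [mul_sub, mul_one, mul_comm (C a) X, ← mul_assoc]
  cases n with
  | zero => simp [geomSeries, coeff_zero_mul_X]
  | succ m =>
    simp [geomSeries, coeff_succ_mul_X, coeff_one, pow_succ, mul_comm]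

open PowerSeries in
lemma geom_mul' (a : R) : geomSeries (-a) * (1 + C a * X) = 1 := by
  have h := geom_mul (-a)
  rw [map_neg, neg_mul, sub_neg_eq_add] at h
  exact h

open PowerSeries in
lemma rescale_neg_one_geom (a : R) : rescale (-1) (geomSeries a) = geomSeries (-a) := by
  ext n
  rw [coeff_rescale]
  simp only [geomSeries, coeff_mk]
  rw [neg_pow a n]

open PowerSeries in
lemma rescale_neg_one_lin (a : R) : rescale (-1 : R) (1 + C a * X) = 1 - C a * X := by
  ext n
  rw [coeff_rescale]
  rcases n with _ | _ | n <;>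
    simp [coeff_one, coeff_C_mul, coeff_X, pow_succ]

open PowerSeries in
lemma rescale_neg_one_lin' (a : R) : rescale (-1 : R) (1 - C a * X) = 1 + C a * X := by
  have h := rescale_neg_one_lin (-a)
  rw [map_neg, neg_mul, ← sub_eq_add_neg, sub_neg_eq_add] at h
  exact h

open PowerSeries in
lemma lin_mul_lin (a : R) :
    (1 + C a * X) * (1 - C a * X) = 1 - C (a ^ 2) * X ^ 2 := by
  rw [map_pow]; ring

lemma esymVal_zero (m : ℕ) (f : ℕ → R) : esymVal m 0 f = 1 := by
  simp [esymVal]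

lemma esymVal_of_lt {m s : ℕ} (h : m < s) (f : ℕ → R) : esymVal m s f = 0 := by
  rw [esymVal, Finset.powersetCard_eq_empty.2 (by simpa using h), sum_empty]

lemma esymVal_succ (m n : ℕ) (f : ℕ → R) :
    esymVal (m + 1) (n + 1) f = esymVal m (n + 1) f + f m * esymVal m n f := by
  have hm : m ∉ range m := by simp
  rw [esymVal, range_add_one, powersetCard_succ_insert hm, sum_union, sum_image]
  · rw [esymVal, esymVal, mul_sum]
    congr 1
    refine sum_congr rfl fun A hA => ?_
    have hmA : m ∉ A := fun h => hm ((mem_powersetCard.1 hA).1 h)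
    rw [prod_insert hmA, mul_comm]
  · intro A hA B hB hAB
    have hmA : m ∉ A := fun h => hm ((mem_powersetCard.1 hA).1 h)
    have hmB : m ∉ B := fun h => hm ((mem_powersetCard.1 hB).1 h)
    rw [← erase_insert hmA, ← erase_insert hmB, hAB]
  · rw [disjoint_left]
    intro A hA hA'
    obtain ⟨B, _, rfl⟩ := mem_image.1 hA'
    exact hm ((mem_powersetCard.1 hA).1 (mem_insert_self m B))

lemma coeff_prod_lin (m n : ℕ) (f : ℕ → R) :
    PowerSeries.coeff n (∏ i ∈ range m, (1 + PowerSeries.C (f i) * PowerSeries.X)) =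
      esymVal m n f := by
  induction m generalizing n with
  | zero =>
    cases n with
    | zero => simp [esymVal_zero]
    | succ j => simp [PowerSeries.coeff_one, esymVal_of_lt (Nat.succ_pos j)]
  | succ m ih =>
    rw [prod_range_succ]
    have h : (∏ i ∈ range m, (1 + PowerSeries.C (f i) * PowerSeries.X)) *
        (1 + PowerSeries.C (f m) * PowerSeries.X) =
        (∏ i ∈ range m, (1 + PowerSeries.C (f i) * PowerSeries.X)) +
          PowerSeries.C (f m) *
            ((∏ i ∈ range m, (1 + PowerSeries.C (f i) * PowerSeries.X)) * PowerSeries.X) := by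
      ring
    rw [h, map_add, PowerSeries.coeff_C_mul]
    cases n with
    | zero =>
      rw [PowerSeries.coeff_zero_mul_X, mul_zero, add_zero, ih, esymVal_zero, esymVal_zero]
    | succ j =>
      rw [PowerSeries.coeff_succ_mul_X, ih, ih, esymVal_succ, mul_comm (f m)]

lemma coeff_prod_quad (m n : ℕ) (f : ℕ → R) :
    PowerSeries.coeff n (∏ i ∈ range m, (1 - PowerSeries.C (f i) * PowerSeries.X ^ 2)) =
      if 2 ∣ n then (-1 : R) ^ (n / 2) * esymVal m (n / 2) f else 0 := by
  induction m generalizing n with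
  | zero =>
    simp only [range_zero, prod_empty, PowerSeries.coeff_one]
    rcases Nat.eq_zero_or_pos n with rfl | hn
    · simp [esymVal_zero]
    · rw [if_neg hn.ne']
      split_ifs with h
      · rcases h with ⟨s, rfl⟩
        have hs : 0 < s := by omega
        rw [Nat.mul_div_cancel_left _ (by norm_num), esymVal_of_lt hs, mul_zero]
      · rfl
  | succ m ih =>
    rw [prod_range_succ]
    have h : (∏ i ∈ range m, (1 - PowerSeries.C (f i) * PowerSeries.X ^ 2)) *
        (1 - PowerSeries.C (f m) * PowerSeries.X ^ 2) =
        (∏ i ∈ range m, (1 - PowerSeries.C (f i) * PowerSeries.X ^ 2)) -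
          PowerSeries.C (f m) *
            ((∏ i ∈ range m, (1 - PowerSeries.C (f i) * PowerSeries.X ^ 2)) *
              PowerSeries.X ^ 2) := by
      ring
    rw [h, map_sub, PowerSeries.coeff_C_mul, PowerSeries.coeff_mul_X_pow']
    match n with
    | 0 => simp [ih, esymVal_zero]
    | 1 =>
      rw [if_neg (by norm_num), mul_zero, sub_zero, ih, if_neg (by norm_num),
        if_neg (by norm_num)]
    | (n + 2) =>
      rw [if_pos (by omega), Nat.add_sub_cancel, ih, ih]
      by_cases h2 : 2 ∣ n
      · obtain ⟨s, rfl⟩ := h2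
        simp only [if_pos (show 2 ∣ 2 * s from ⟨s, rfl⟩),
          if_pos (show 2 ∣ 2 * s + 2 from ⟨s + 1, by ring⟩),
          show 2 * s / 2 = s by omega, show (2 * s + 2) / 2 = s + 1 by omega,
          esymVal_succ, pow_succ]
        ring
      · simp only [if_neg h2, if_neg (show ¬ 2 ∣ n + 2 by omega), mul_zero, sub_zero]

open PowerSeries in
lemma GF_mul (k N l : ℕ) (x z t : ℕ → R) :
    thetaGF k N x z t (l : ℤ) * rescale (-1) (thetaGF k N x z t (l : ℤ)) =
      (∏ i ∈ range k, (1 - C (z i ^ 2) * X ^ 2)) *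
        ∏ i ∈ range l, (1 - C (t i ^ 2) * X ^ 2) := by
  rw [thetaGF, if_pos (Int.natCast_nonneg l), Int.toNat_natCast]
  rw [map_mul, map_mul, map_prod, map_prod, map_prod]
  have hX : ∏ i ∈ range N, rescale (-1 : R) ((1 + C (x i) * X) * geomSeries (x i)) =
      ∏ i ∈ range N, ((1 - C (x i) * X) * geomSeries (-(x i))) :=
    prod_congr rfl fun i _ => by rw [map_mul, rescale_neg_one_lin, rescale_neg_one_geom]
  have hZ : ∏ i ∈ range k, rescale (-1 : R) (1 + C (z i) * X) =
      ∏ i ∈ range k, (1 - C (z i) * X) :=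
    prod_congr rfl fun i _ => by rw [rescale_neg_one_lin]
  have hT : ∏ i ∈ range l, rescale (-1 : R) (1 - C (t i) * X) =
      ∏ i ∈ range l, (1 + C (t i) * X) :=
    prod_congr rfl fun i _ => by rw [rescale_neg_one_lin']
  rw [hX, hZ, hT]
  have key : ∀ A B C A' B' C' : PowerSeries R,
      (A * B * C) * (A' * B' * C') = (A * A') * ((B * B') * (C * C')) := fun _ _ _ _ _ _ => by
    ring
  rw [key, ← prod_mul_distrib, ← prod_mul_distrib, ← prod_mul_distrib]
  have h1 : ∏ i ∈ range N,
      (((1 + C (x i) * X) * geomSeries (x i)) * ((1 - C (x i) * X) * geomSeries (-(x i))))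
      = 1 := by
    refine prod_eq_one fun i _ => ?_
    calc ((1 + C (x i) * X) * geomSeries (x i)) * ((1 - C (x i) * X) * geomSeries (-(x i)))
        = (geomSeries (x i) * (1 - C (x i) * X)) *
            (geomSeries (-(x i)) * (1 + C (x i) * X)) := by ring
      _ = 1 := by rw [geom_mul, geom_mul', mul_one]
  rw [h1, one_mul]
  congr 1
  · exact prod_congr rfl fun i _ => lin_mul_lin (z i)
  · exact prod_congr rfl fun i _ => by rw [mul_comm, lin_mul_lin]

lemma esymVal_add (k l r : ℕ) (p q : ℕ → R) :
    esymVal (k + l) r (fun i => if i < k then p i else q (i - k)) =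
      ∑ s ∈ range (r + 1), esymVal k s p * esymVal l (r - s) q := by
  have h1 := coeff_prod_lin (k + l) r (fun i => if i < k then p i else q (i - k))
  rw [prod_range_add] at h1
  have h2 : ∏ i ∈ range k,
      (1 + PowerSeries.C (if i < k then p i else q (i - k)) * PowerSeries.X) =
      ∏ i ∈ range k, (1 + PowerSeries.C (p i) * PowerSeries.X) :=
    prod_congr rfl fun i hi => by rw [if_pos (mem_range.1 hi)]
  have h3 : ∏ i ∈ range l,
      (1 + PowerSeries.C (if k + i < k then p (k + i) else q (k + i - k)) * PowerSeries.X) =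
      ∏ i ∈ range l, (1 + PowerSeries.C (q i) * PowerSeries.X) :=
    prod_congr rfl fun i _ => by rw [if_neg (by omega), Nat.add_sub_cancel_left]
  rw [h2, h3, PowerSeries.coeff_mul, Finset.Nat.sum_antidiagonal_eq_sum_range_succ_mk] at h1
  rw [← h1]
  exact sum_congr rfl fun s _ => by rw [coeff_prod_lin, coeff_prod_lin]

lemma sum_range_two_mul (r : ℕ) (g : ℕ → R) (hg : ∀ j ≤ r, g (r + j) = g (r - j)) :
    ∑ b ∈ range (2 * r + 1), g b = g r + 2 * ∑ j ∈ Icc 1 r, g (r + j) := by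
  have hsplit : ∑ b ∈ range (2 * r + 1), g b =
      ∑ b ∈ Ico 0 (r + 1), g b + ∑ b ∈ Ico (r + 1) (2 * r + 1), g b := by
    rw [sum_Ico_consecutive _ (by omega) (by omega), range_eq_Ico]
  have h2 : ∑ b ∈ Ico (r + 1) (2 * r + 1), g b = ∑ i ∈ range r, g (r + (i + 1)) := by
    rw [sum_Ico_eq_sum_range]
    exact sum_congr (by congr 1; omega) fun i _ => by congr 1; omega
  have h1 : ∑ b ∈ Ico 0 (r + 1), g b = g r + ∑ i ∈ range r, g (r + (i + 1)) := by
    rw [← range_eq_Ico, sum_range_succ, add_comm]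
    congr 1
    rw [← sum_range_reflect]
    refine sum_congr rfl fun i hi => ?_
    have hi' : i < r := mem_range.1 hi
    rw [show r - 1 - i = r - (i + 1) by omega, ← hg (i + 1) (by omega)]
  have h4 : ∑ j ∈ Icc 1 r, g (r + j) = ∑ i ∈ range r, g (r + (i + 1)) := by
    rw [show Icc 1 r = Ico 1 (r + 1) by rw [← Finset.Ico_add_one_right_eq_Icc], sum_Ico_eq_sum_range]
    simp only [Nat.add_sub_cancel]
    exact sum_congr rfl fun i _ => by congr 1; omega
  rw [hsplit, h1, h2, h4]
  ring

open PowerSeries in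
lemma coeff_GF_sq (k N l : ℕ) (x z t : ℕ → R) (r : ℕ) :
    coeff (2 * r) (thetaGF k N x z t (l : ℤ) * rescale (-1) (thetaGF k N x z t (l : ℤ))) =
      (-1 : R) ^ r * ∑ s ∈ range (r + 1),
        esymVal k s (fun i => z i ^ 2) * esymVal l (r - s) (fun i => t i ^ 2) := by
  rw [GF_mul]
  have hmerge : (∏ i ∈ range k, (1 - C (z i ^ 2) * X ^ 2)) *
      ∏ i ∈ range l, (1 - C (t i ^ 2) * X ^ 2) =
      ∏ i ∈ range (k + l),
        (1 - C ((fun i => if i < k then z i ^ 2 else t (i - k) ^ 2) i) * X ^ 2) := by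
    rw [prod_range_add]
    congr 1
    · exact prod_congr rfl fun i hi => by simp only [if_pos (mem_range.1 hi)]
    · exact prod_congr rfl fun i _ => by
        simp only [if_neg (show ¬ k + i < k by omega), Nat.add_sub_cancel_left]
  rw [hmerge, coeff_prod_quad, if_pos ⟨r, rfl⟩, show 2 * r / 2 = r by omega]
  congr 1
  exact esymVal_add k l r (fun i => z i ^ 2) (fun i => t i ^ 2)

lemma neg_one_pow_mul_self (r : ℕ) : (-1 : R) ^ r * (-1 : R) ^ r = 1 := by
  rw [← pow_add, show r + r = 2 * r by omega, pow_mul]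
  norm_num

/-- Lemma 5.2 of Ikeda–Matsumura: the square relation for the double theta polynomials. -/
theorem theta_square_relation (k N : ℕ) (x z t : ℕ → R) (l r : ℕ) :
    theta k N x z t l r * theta k N x z t l r
        + 2 * ∑ j ∈ Icc 1 r, (-1 : R) ^ j *
            theta k N x z t l ((r : ℤ) + j) * theta k N x z t l ((r : ℤ) - j)
      = if r ≤ k + l then
          ∑ s ∈ range (r + 1),
            esymVal k s (fun i => z i ^ 2) * esymVal l (r - s) (fun i => t i ^ 2)
        else 0 := by
  classical
  have hth : ∀ n : ℕ, theta k N x z t (l : ℤ) (n : ℤ) =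
      PowerSeries.coeff n (thetaGF k N x z t (l : ℤ)) := fun n => by
    rw [theta, if_neg (not_lt.2 (Int.natCast_nonneg n)), Int.toNat_natCast]
  set c : ℕ → R := fun n => PowerSeries.coeff n (thetaGF k N x z t (l : ℤ)) with hc
  have hth' : ∀ n : ℕ, theta k N x z t (l : ℤ) (n : ℤ) = c n := hth
  rw [hth' r]
  have hsum : ∑ j ∈ Icc 1 r, (-1 : R) ^ j * theta k N x z t l ((r : ℤ) + j) *
      theta k N x z t l ((r : ℤ) - j) =
      ∑ j ∈ Icc 1 r, (-1 : R) ^ j * c (r + j) * c (r - j) := by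
    refine sum_congr rfl fun j hj => ?_
    obtain ⟨hj1, hj2⟩ := mem_Icc.1 hj
    rw [show (r : ℤ) + j = ((r + j : ℕ) : ℤ) by push_cast; ring,
      show (r : ℤ) - j = ((r - j : ℕ) : ℤ) by omega, hth', hth']
  rw [hsum]
  set g : ℕ → R := fun b => c b * ((-1 : R) ^ (2 * r - b) * c (2 * r - b)) with hg
  have hgsymm : ∀ j ≤ r, g (r + j) = g (r - j) := by
    intro j hj
    simp only [hg]
    rw [show 2 * r - (r + j) = r - j by omega, show 2 * r - (r - j) = r + j by omega,
      show (-1 : R) ^ (r + j) = (-1 : R) ^ (r - j) by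
        rw [show r + j = (r - j) + 2 * j by omega, pow_add, pow_mul]; norm_num]
    ring
  have key : c r * c r + 2 * ∑ j ∈ Icc 1 r, (-1 : R) ^ j * c (r + j) * c (r - j) =
      (-1 : R) ^ r * PowerSeries.coeff (2 * r)
        (thetaGF k N x z t (l : ℤ) * PowerSeries.rescale (-1) (thetaGF k N x z t (l : ℤ))) := by
    rw [PowerSeries.coeff_mul, Finset.Nat.sum_antidiagonal_eq_sum_range_succ_mk]
    have hsum2 : ∑ i ∈ range (2 * r + 1),
        PowerSeries.coeff (i, 2 * r - i).1 (thetaGF k N x z t (l : ℤ)) *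
          PowerSeries.coeff (i, 2 * r - i).2
            (PowerSeries.rescale (-1) (thetaGF k N x z t (l : ℤ))) =
        ∑ i ∈ range (2 * r + 1), g i := by
      refine sum_congr rfl fun i _ => ?_
      simp only [hg]
      rw [PowerSeries.coeff_rescale]
    rw [hsum2, sum_range_two_mul r g hgsymm]
    have hgr : (-1 : R) ^ r * g r = c r * c r := by
      simp only [hg]
      rw [show 2 * r - r = r by omega]
      calc (-1 : R) ^ r * (c r * ((-1 : R) ^ r * c r))
          = ((-1 : R) ^ r * (-1 : R) ^ r) * (c r * c r) := by ring
        _ = c r * c r := by rw [neg_one_pow_mul_self, one_mul]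
    have hgj : ∀ j ∈ Icc 1 r, (-1 : R) ^ r * g (r + j) =
        (-1 : R) ^ j * c (r + j) * c (r - j) := by
      intro j hj
      obtain ⟨hj1, hj2⟩ := mem_Icc.1 hj
      simp only [hg]
      rw [show 2 * r - (r + j) = r - j by omega]
      have hpw : (-1 : R) ^ r * (-1 : R) ^ (r - j) = (-1 : R) ^ j := by
        rw [← pow_add, show r + (r - j) = j + 2 * (r - j) by omega, pow_add, pow_mul]
        norm_num
      calc (-1 : R) ^ r * (c (r + j) * ((-1 : R) ^ (r - j) * c (r - j)))
          = ((-1 : R) ^ r * (-1 : R) ^ (r - j)) * (c (r + j) * c (r - j)) := by ring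
        _ = (-1 : R) ^ j * c (r + j) * c (r - j) := by rw [hpw]; ring
    have hfin : (-1 : R) ^ r * (2 * ∑ j ∈ Icc 1 r, g (r + j)) =
        2 * ∑ j ∈ Icc 1 r, (-1 : R) ^ j * c (r + j) * c (r - j) := by
      rw [mul_left_comm, mul_sum, sum_congr rfl hgj]
    rw [mul_add, hgr, hfin]
  rw [key, coeff_GF_sq k N l x z t r, ← mul_assoc, neg_one_pow_mul_self, one_mul]
  split_ifs with h
  · rfl
  · refine sum_eq_zero fun s hs => ?_
    by_cases hsk : s ≤ k
    · rw [esymVal_of_lt (show l < r - s by omega), mul_zero]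
    · rw [esymVal_of_lt (show k < s by omega), zero_mul]

end
end

section
/- Fix k ≥ 0. Let δ_i = (f − s_i^t f)/α_i be the left divided difference operator on R_∞, where α_0 = 2t_1 and α_i = t_{i+1} − t_i for i ≥ 1. Then δ_i(ϑ_r^{(l)}) = 0 if l ≠ ±i, and δ_i(ϑ_r^{(±i)}) = ϑ_{r-1}^{(±i−1)} (i.e., δ_i(ϑ_r^{(i)}) = ϑ_{r-1}^{(i-1)} for i ≥ 0 and δ_i(ϑ_r^{(-i)}) = ϑ_{r-1}^{(-i-1)} for i > 0). -/
/-!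
Statement 4: Fix `k ≥ 0`.  Let `δ_i f = (f − s_i^t f)/α_i` be the left divided difference
operator on `R_∞`, where `α_0 = 2t_1` and `α_i = t_{i+1} − t_i` for `i ≥ 1`.  Then
`δ_i(ϑ_r^{(l)}) = 0` if `l ≠ ±i`, and `δ_i(ϑ_r^{(±i)}) = ϑ_{r-1}^{(±i−1)}` (that is,
`δ_i(ϑ_r^{(i)}) = ϑ_{r-1}^{(i-1)}` for `i ≥ 0` and `δ_i(ϑ_r^{(-i)}) = ϑ_{r-1}^{(-i-1)}` for
`i > 0`).

We realize the theta polynomials by their generating functions, universally over every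
commutative ring, every number `N` of (possibly nonzero) `x`-variables and all values of the
variables (0-indexed: `x i, z i, t i` stand for `x_{i+1}, z_{i+1}, t_{i+1}`).  Since `α_i` is a
regular element of the generic polynomial ring, the equation `δ_i f = g` is equivalent to the
multiplied form `f − s_i^t f = α_i · g`, which is how we state it (the case `δ_i f = 0` being
`s_i^t f = f`). -/

open Finset PowerSeries

noncomputable section

variable {R : Type*} [CommRing R]

/-- The image `s_i^t(ϑ_r^{(l)})` of a double theta polynomial under the left Weyl group action:
for `i ≥ 1` the variables `t_i` and `t_{i+1}` are swapped; for `i = 0`, `t_1 ↦ -t_1` and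
`Q_r(x) ↦ Q_r(-t_1, x)`. -/
def thetaST (i k N : ℕ) (x z t : ℕ → R) (l r : ℤ) : R :=
  if i = 0 then
    theta k (N + 1) (fun j => if j = 0 then -(t 0) else x (j - 1)) z
      (Function.update t 0 (-(t 0))) l r
  else
    theta k N x z (t ∘ Equiv.swap (i - 1) i) l r

/-- The simple root `α_i`: `α_0 = 2t_1`, `α_i = t_{i+1} − t_i` for `i ≥ 1`. -/
def alphaRoot (i : ℕ) (t : ℕ → R) : R := if i = 0 then 2 * t 0 else t i - t (i - 1)

lemma geom_mul_one_sub (a : R) : geomSeries a * (1 - PowerSeries.C a * PowerSeries.X) = 1 := by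
  ext n
  cases n with
  | zero => simp [geomSeries, mul_sub, mul_comm, mul_assoc]
  | succ n =>
      rw [mul_sub, mul_one, mul_comm (geomSeries a), mul_assoc, map_sub, coeff_C_mul,
        coeff_succ_X_mul]
      simp [geomSeries, pow_succ, mul_comm a]

lemma geom_neg_mul_one_add (a : R) :
    geomSeries (-a) * (1 + PowerSeries.C a * PowerSeries.X) = 1 := by
  have := geom_mul_one_sub (-a)
  simpa [sub_eq_add_neg] using this

lemma geom_sub_geom (a b : R) :
    geomSeries (-a) - geomSeries (-b)
      = PowerSeries.C (b - a) * PowerSeries.X * (geomSeries (-a) * geomSeries (-b)) := by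
  have ha := geom_neg_mul_one_add a
  have hb := geom_neg_mul_one_add b
  rw [map_sub]
  linear_combination geomSeries (-b) * ha - geomSeries (-a) * hb

def Fpart (k N : ℕ) (x z : ℕ → R) : PowerSeries R :=
  (∏ i ∈ range N, ((1 + PowerSeries.C (x i) * PowerSeries.X) * geomSeries (x i))) *
    (∏ i ∈ range k, (1 + PowerSeries.C (z i) * PowerSeries.X))

lemma thetaGF_ofNat (k N : ℕ) (x z t : ℕ → R) (m : ℕ) :
    thetaGF k N x z t m
      = Fpart k N x z * ∏ j ∈ range m, (1 - PowerSeries.C (t j) * PowerSeries.X) := by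
  simp [thetaGF, Fpart]

lemma thetaGF_negNat (k N : ℕ) (x z t : ℕ → R) (m : ℕ) :
    thetaGF k N x z t (-(m : ℤ))
      = Fpart k N x z * ∏ j ∈ range m, geomSeries (-(t j)) := by
  rcases Nat.eq_zero_or_pos m with h | h
  · subst h; simp [thetaGF, Fpart]
  · have h1 : ¬ (0 ≤ -(m:ℤ)) := by omega
    have h2 : (-(-(m:ℤ))).toNat = m := by omega
    simp [thetaGF, Fpart, h1, h2, h.ne']

lemma bridge (f g h : PowerSeries R) (a : R)
    (H : f - g = PowerSeries.C a * PowerSeries.X * h) (r : ℤ) :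
    (if r < 0 then (0:R) else PowerSeries.coeff r.toNat f)
      - (if r < 0 then 0 else PowerSeries.coeff r.toNat g)
      = a * (if r - 1 < 0 then 0 else PowerSeries.coeff (r-1).toNat h) := by
  rcases lt_trichotomy r 0 with hr | hr | hr
  · rw [if_pos hr, if_pos hr, if_pos (by omega : r - 1 < 0)]
    ring
  · subst hr
    rw [if_neg (by omega), if_neg (by omega), if_pos (by omega : (0:ℤ) - 1 < 0)]
    have : PowerSeries.coeff 0 (f - g) = 0 := by
      rw [H, mul_assoc]
      simp [PowerSeries.coeff_zero_eq_constantCoeff, map_mul]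
    simpa using this
  · obtain ⟨n, rfl⟩ : ∃ n : ℕ, r = (n:ℤ) + 1 := ⟨(r-1).toNat, by omega⟩
    rw [if_neg (by omega), if_neg (by omega), if_neg (by omega)]
    have h1 : ((n:ℤ) + 1).toNat = n + 1 := by omega
    have h2 : ((n:ℤ) + 1 - 1).toNat = n := by omega
    rw [h1, h2, ← map_sub, H, mul_assoc, PowerSeries.coeff_C_mul, PowerSeries.coeff_succ_X_mul]

lemma prod_swap_invar {M : Type*} [CommMonoid M] (i m : ℕ) (hi : i ≠ 0) (hm : m ≠ i)
    (g : ℕ → M) : ∏ j ∈ range m, g (Equiv.swap (i-1) i j) = ∏ j ∈ range m, g j := by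
  rcases lt_or_gt_of_ne hm with h | h
  · refine Finset.prod_congr rfl fun j hj => ?_
    rw [mem_range] at hj
    rw [Equiv.swap_apply_of_ne_of_ne (by omega) (by omega)]
  · refine Finset.prod_equiv (Equiv.swap (i-1) i) (fun j => ?_) (fun j hj => rfl)
    simp only [mem_range, Equiv.swap_apply_def]
    split_ifs <;> omega

lemma Fpart_succ (k N : ℕ) (x z t : ℕ → R) :
    Fpart k (N+1) (fun j => if j = 0 then -(t 0) else x (j-1)) z
      = ((1 - PowerSeries.C (t 0) * PowerSeries.X) * geomSeries (-(t 0)))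
          * Fpart k N x z := by
  unfold Fpart
  rw [Finset.prod_range_succ']
  simp only [Nat.succ_ne_zero, reduceIte, Nat.add_sub_cancel, map_neg, Nat.add_one_ne_zero]
  ring

lemma s0_pos (k N : ℕ) (x z t : ℕ → R) (m : ℕ) (hm : m ≠ 0) :
    thetaGF k (N+1) (fun j => if j = 0 then -(t 0) else x (j-1)) z
      (Function.update t 0 (-(t 0))) (m:ℤ) = thetaGF k N x z t m := by
  obtain ⟨m', rfl⟩ := Nat.exists_eq_succ_of_ne_zero hm
  rw [thetaGF_ofNat, thetaGF_ofNat, Fpart_succ, Finset.prod_range_succ',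
    Finset.prod_range_succ' (fun j => 1 - PowerSeries.C (t j) * PowerSeries.X)]
  simp only [Function.update_self, Function.update_of_ne (Nat.succ_ne_zero _), map_neg]
  have h := geom_neg_mul_one_add (t 0)
  linear_combination ((1 - PowerSeries.C (t 0) * PowerSeries.X) * Fpart k N x z *
    ∏ j ∈ range m', (1 - PowerSeries.C (t (j+1)) * PowerSeries.X)) * h

lemma s0_neg (k N : ℕ) (x z t : ℕ → R) (m : ℕ) (hm : m ≠ 0) :
    thetaGF k (N+1) (fun j => if j = 0 then -(t 0) else x (j-1)) z
      (Function.update t 0 (-(t 0))) (-(m:ℤ)) = thetaGF k N x z t (-(m:ℤ)) := by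
  obtain ⟨m', rfl⟩ := Nat.exists_eq_succ_of_ne_zero hm
  rw [thetaGF_negNat, thetaGF_negNat, Fpart_succ, Finset.prod_range_succ',
    Finset.prod_range_succ' (fun j => geomSeries (-(t j)))]
  simp only [Function.update_self, Function.update_of_ne (Nat.succ_ne_zero _), neg_neg]
  have h := geom_mul_one_sub (t 0)
  linear_combination (geomSeries (-(t 0)) * Fpart k N x z *
    ∏ j ∈ range m', geomSeries (-(t (j+1)))) * h

lemma s0_zero (k N : ℕ) (x z t : ℕ → R) :
    thetaGF k N x z t 0 - thetaGF k (N+1) (fun j => if j = 0 then -(t 0) else x (j-1)) z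
      (Function.update t 0 (-(t 0))) 0
    = PowerSeries.C (2 * t 0) * PowerSeries.X * thetaGF k N x z t (-1) := by
  have e0 : ((0:ℕ):ℤ) = 0 := rfl
  have e1 : (-(1:ℤ)) = -((1:ℕ):ℤ) := rfl
  rw [e1, thetaGF_negNat, ← e0, thetaGF_ofNat, thetaGF_ofNat, Fpart_succ]
  simp only [Finset.prod_range_zero, Finset.prod_range_one, mul_one]
  have h := geom_neg_mul_one_add (t 0)
  simp only [map_mul, map_ofNat]
  linear_combination (-(Fpart k N x z)) * h

lemma sI_fix (k N : ℕ) (x z t : ℕ → R) (i : ℕ) (hi : i ≠ 0) (l : ℤ)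
    (h1 : l ≠ (i:ℤ)) (h2 : l ≠ -(i:ℤ)) :
    thetaGF k N x z (t ∘ Equiv.swap (i-1) i) l = thetaGF k N x z t l := by
  rcases Int.eq_nat_or_neg l with ⟨m, rfl | rfl⟩
  · have hm : m ≠ i := by intro e; subst e; exact h1 rfl
    rw [thetaGF_ofNat, thetaGF_ofNat]
    congr 1
    exact prod_swap_invar i m hi hm
      (fun j => 1 - PowerSeries.C (t j) * PowerSeries.X)
  · have hm : m ≠ i := by intro e; subst e; exact h2 rfl
    rw [thetaGF_negNat, thetaGF_negNat]
    congr 1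
    exact prod_swap_invar i m hi hm (fun j => geomSeries (-(t j)))

lemma sI_pos (k N : ℕ) (x z t : ℕ → R) (i' : ℕ) :
    thetaGF k N x z t ((i'+1 : ℕ):ℤ)
      - thetaGF k N x z (t ∘ Equiv.swap i' (i'+1)) ((i'+1 : ℕ):ℤ)
      = PowerSeries.C (t (i'+1) - t i') * PowerSeries.X * thetaGF k N x z t (i' : ℕ) := by
  rw [thetaGF_ofNat, thetaGF_ofNat, thetaGF_ofNat, Finset.prod_range_succ,
    Finset.prod_range_succ]
  have hpre := prod_swap_invar (i'+1) i' (Nat.succ_ne_zero i') (by omega)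
      (fun j => 1 - PowerSeries.C (t j) * PowerSeries.X)
  simp only [Nat.add_sub_cancel] at hpre
  rw [show ((t ∘ Equiv.swap i' (i'+1)) i') = t (i'+1) by
    simp [Equiv.swap_apply_left]]
  have : (∏ j ∈ range i', (1 - PowerSeries.C ((t ∘ Equiv.swap i' (i'+1)) j) * PowerSeries.X))
      = ∏ j ∈ range i', (1 - PowerSeries.C (t j) * PowerSeries.X) := hpre
  rw [this, map_sub]
  ring

lemma sI_neg (k N : ℕ) (x z t : ℕ → R) (i' : ℕ) :
    thetaGF k N x z t (-((i'+1 : ℕ):ℤ))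
      - thetaGF k N x z (t ∘ Equiv.swap i' (i'+1)) (-((i'+1 : ℕ):ℤ))
      = PowerSeries.C (t (i'+1) - t i') * PowerSeries.X
          * thetaGF k N x z t (-((i'+2 : ℕ):ℤ)) := by
  rw [thetaGF_negNat, thetaGF_negNat, thetaGF_negNat, Finset.prod_range_succ,
    Finset.prod_range_succ, Finset.prod_range_succ, Finset.prod_range_succ]
  have hpre := prod_swap_invar (i'+1) i' (Nat.succ_ne_zero i') (by omega)
      (fun j => geomSeries (-(t j)))
  simp only [Nat.add_sub_cancel] at hpre
  rw [show ((t ∘ Equiv.swap i' (i'+1)) i') = t (i'+1) by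
    simp [Equiv.swap_apply_left]]
  have : (∏ j ∈ range i', geomSeries (-((t ∘ Equiv.swap i' (i'+1)) j)))
      = ∏ j ∈ range i', geomSeries (-(t j)) := hpre
  rw [this]
  have key := geom_sub_geom (t i') (t (i'+1))
  linear_combination (Fpart k N x z * ∏ j ∈ range i', geomSeries (-(t j))) * key

/-- Lemma 5.5 of Ikeda–Matsumura: the left divided difference operators on double theta
polynomials, in multiplied form `ϑ − s_i^t ϑ = α_i · (δ_i ϑ)`. -/
theorem delta_on_theta (k N : ℕ) (x z t : ℕ → R) :
    -- `δ_i(ϑ_r^{(l)}) = 0` if `l ≠ ±i`, i.e. `s_i^t` fixes `ϑ_r^{(l)}`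
    (∀ i : ℕ, ∀ l r : ℤ, l ≠ (i : ℤ) → l ≠ -(i : ℤ) →
      theta k N x z t l r - thetaST i k N x z t l r = 0) ∧
    -- `δ_i(ϑ_r^{(i)}) = ϑ_{r-1}^{(i-1)}` for `i ≥ 0`
    (∀ i : ℕ, ∀ r : ℤ,
      theta k N x z t i r - thetaST i k N x z t i r
        = alphaRoot i t * theta k N x z t ((i : ℤ) - 1) (r - 1)) ∧
    -- `δ_i(ϑ_r^{(-i)}) = ϑ_{r-1}^{(-i-1)}` for `i > 0`
    (∀ i : ℕ, 0 < i → ∀ r : ℤ,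
      theta k N x z t (-(i : ℤ)) r - thetaST i k N x z t (-(i : ℤ)) r
        = alphaRoot i t * theta k N x z t (-(i : ℤ) - 1) (r - 1)) := by
  refine ⟨?_, ?_, ?_⟩
  · intro i l r h1 h2
    rw [sub_eq_zero]
    by_cases hi : i = 0
    · subst hi
      have hl : l ≠ 0 := by simpa using h1
      simp only [thetaST, reduceIte, theta]
      rcases Int.eq_nat_or_neg l with ⟨m, rfl | rfl⟩
      · have hm : m ≠ 0 := by rintro rfl; exact hl rfl
        rw [s0_pos k N x z t m hm]
      · have hm : m ≠ 0 := by rintro rfl; exact hl (by norm_num)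
        rw [s0_neg k N x z t m hm]
    · simp only [thetaST, if_neg hi, theta]
      rw [sI_fix k N x z t i hi l h1 h2]
  · intro i r
    by_cases hi : i = 0
    · subst hi
      simp only [thetaST, reduceIte, theta, alphaRoot, Nat.cast_zero, zero_sub]
      exact bridge _ _ _ _ (s0_zero k N x z t) r
    · obtain ⟨i', rfl⟩ := Nat.exists_eq_succ_of_ne_zero hi
      simp only [thetaST, if_neg hi, theta, alphaRoot, Nat.add_sub_cancel, Nat.succ_ne_zero,
        reduceIte]
      have e : ((i'+1 : ℕ):ℤ) - 1 = ((i' : ℕ):ℤ) := by push_cast; ring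
      rw [e]
      exact bridge _ _ _ _ (sI_pos k N x z t i') r
  · intro i hi0 r
    have hi : i ≠ 0 := by omega
    obtain ⟨i', rfl⟩ := Nat.exists_eq_succ_of_ne_zero hi
    simp only [thetaST, if_neg hi, theta, alphaRoot, Nat.add_sub_cancel, Nat.succ_ne_zero,
      reduceIte]
    have e : -((i'+1 : ℕ):ℤ) - 1 = -((i'+2 : ℕ):ℤ) := by push_cast; ring
    rw [e]
    exact bridge _ _ _ _ (sI_neg k N x z t i') r

end
end

section
/- The invariant subring R_∞^{(k)} = {f ∈ R_∞ : s_i^z(f) = f for all i ≥ 0, i ≠ k} decomposes as a free ℤ[t]-module with basis the type C double Schubert polynomials 𝔠_w indexed by the minimum-length coset representatives w ∈ W_∞^{(k)}: R_∞^{(k)} = ⊕_{w ∈ W_∞^{(k)}} ℤ[t]·𝔠_w. -/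
/-!
Statement 9 (Proposition 3.1 of Ikeda–Matsumura): the invariant subring
`R_∞^{(k)} = {f ∈ R_∞ : s_i^z(f) = f for all i ≥ 0, i ≠ k}` decomposes as a free
`ℤ[t]`-module with basis the type `C` double Schubert polynomials `𝔠_w` indexed by the
minimum-length coset representatives `w ∈ W_∞^{(k)}`:
`R_∞^{(k)} = ⊕_{w ∈ W_∞^{(k)}} ℤ[t]·𝔠_w`.

Formalization.  `W_∞` is realized as the Coxeter group of the type `C_∞` Coxeter matrix on
`ℕ`; `ℤ[t] = ℤ[t_1,t_2,…]` as `MvPolynomial ℕ ℤ`.  The ambient ring `R_∞` is a commutative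
`ℤ[t]`-algebra `A`; the right `W_∞`-action is given by its generators
`sz i = s_i^z`, which are `ℤ[t]`-algebra automorphisms; the double Schubert polynomials are a
`ℤ[t]`-basis `b` of `A` (Theorem 2.1 of the paper); the right divided difference operators
`∂ i` are `ℤ[t]`-linear operators satisfying `∂_i 𝔠_w = 𝔠_{w s_i}` if `ℓ(w s_i) < ℓ(w)` and
`∂_i 𝔠_w = 0` otherwise, and `∂_i f = 0 ↔ s_i^z f = f` (as follows from
`∂_i f = (f − s_i^z f)/ω(α_i)`).  Under these hypotheses — all satisfied by the actual
`R_∞` — the invariant submodule under all `s_i^z`, `i ≠ k`, is the span of the `𝔠_w` with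
`w ∈ W_∞^{(k)} = {w : ℓ(w s_j) > ℓ(w) for all j ≠ k}`; being spanned by part of a basis, it is
the direct sum `⊕_{w ∈ W_∞^{(k)}} ℤ[t]·𝔠_w`. -/

open CoxeterSystem

/-- The type `C_∞` Coxeter matrix on `ℕ`. -/
def CinfMatrix : CoxeterMatrix ℕ where
  M := Matrix.of fun i j : ℕ =>
    if i = j then 1
    else if i + j = 1 then 4
    else if max i j = min i j + 1 then 3
    else 2
  diagonal := by
    intro i
    simp [Matrix.of_apply]
  isSymm := by
    ext i j
    simp only [Matrix.transpose_apply, Matrix.of_apply]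
    split_ifs <;> omega
  off_diagonal := by
    intro i j hij
    simp only [Matrix.of_apply]
    split_ifs <;> omega

/-- The type `C_∞` Weyl group `W_∞`. -/
abbrev Winf : Type := CinfMatrix.Group

/-- The Coxeter system of `C_∞`. -/
def WinfSystem : CoxeterSystem CinfMatrix Winf := CinfMatrix.toCoxeterSystem

/-- The set `W_∞^{(k)}` of minimum-length coset representatives of `W_∞ / W_(k)`. -/
def grassmannianInf (k : ℕ) : Set Winf :=
  {w | ∀ j : ℕ, j ≠ k →
    WinfSystem.length w < WinfSystem.length (w * WinfSystem.simple j)}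

/-- `R_∞^{(k)} = ⊕_{w ∈ W_∞^{(k)}} ℤ[t]·𝔠_w`. -/
theorem invariant_subring_basis (k : ℕ)
    (A : Type*) [CommRing A] [Algebra (MvPolynomial ℕ ℤ) A]
    -- the right action of the generators `s_i^z` by `ℤ[t]`-algebra automorphisms
    (sz : ℕ → (A ≃ₐ[MvPolynomial ℕ ℤ] A))
    -- the right divided difference operators, `ℤ[t]`-linear
    (par : ℕ → (A →ₗ[MvPolynomial ℕ ℤ] A))
    -- `∂_i f = 0` iff `s_i^z f = f`  (from `∂_i f = (f − s_i^z f)/ω(α_i)`)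
    (hlink : ∀ (i : ℕ) (f : A), par i f = 0 ↔ sz i f = f)
    -- the double Schubert polynomials `𝔠_w`, a `ℤ[t]`-basis of `R_∞`
    (b : Module.Basis Winf (MvPolynomial ℕ ℤ) A)
    -- `∂_i 𝔠_w = 𝔠_{w s_i}` if `ℓ(w s_i) < ℓ(w)`, and `= 0` otherwise
    (hpar : ∀ (w : Winf) (i : ℕ),
      par i (b w) =
        if WinfSystem.length (w * WinfSystem.simple i) < WinfSystem.length w then
          b (w * WinfSystem.simple i)
        else 0) :
    (⨅ i ∈ {i : ℕ | i ≠ k},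
        LinearMap.eqLocus ((sz i).toLinearMap) (LinearMap.id : A →ₗ[MvPolynomial ℕ ℤ] A))
      = Submodule.span (MvPolynomial ℕ ℤ) (⇑b '' grassmannianInf k) := by

  apply le_antisymm
  · -- invariants ⊆ span
    intro f hf
    rw [Module.Basis.mem_span_image]
    intro w hw
    by_contra hwG
    simp only [grassmannianInf, Set.mem_setOf_eq, not_forall] at hwG
    obtain ⟨j, hjk, hlen⟩ := hwG
    have hdrop : WinfSystem.length (w * WinfSystem.simple j) < WinfSystem.length w := by
      rcases WinfSystem.length_mul_simple w j with h | h <;> omega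
    -- f is invariant under sz j, so par j f = 0
    have hinv : par j f = 0 := by
      rw [hlink]
      have := (Submodule.mem_iInf _).1 hf j
      have := (Submodule.mem_iInf _).1 this hjk
      exact this
    -- compute the coefficient of b (w * s j) in par j f
    have hcoeff : (b.repr (par j f)) (w * WinfSystem.simple j) = b.repr f w := by
      conv_lhs => rw [← b.linearCombination_repr f, Finsupp.linearCombination_apply,
        map_finsuppSum, map_finsuppSum]
      rw [Finsupp.sum_apply]
      rw [Finsupp.sum_eq_single w]
      · rw [map_smul, hpar, if_pos hdrop, map_smul, Finsupp.smul_apply, b.repr_self,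
          Finsupp.single_eq_same, smul_eq_mul, mul_one]
      · intro v _ hvw
        rw [map_smul, hpar, map_smul, Finsupp.smul_apply]
        split_ifs with h
        · rw [b.repr_self, Finsupp.single_eq_of_ne, smul_zero]
          intro hcontr
          exact hvw (mul_right_cancel hcontr.symm)
        · simp
      · intro _; simp
    rw [hinv, map_zero, Finsupp.zero_apply] at hcoeff
    simp only [Finset.mem_coe, Finsupp.mem_support_iff] at hw
    exact hw hcoeff.symm
  · -- span ⊆ invariants
    rw [Submodule.span_le]
    rintro _ ⟨w, hwG, rfl⟩
    simp only [SetLike.mem_coe, Submodule.mem_iInf, Set.mem_setOf_eq]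
    intro i hik
    have hlen := hwG i hik
    have hzero : par i (b w) = 0 := by
      rw [hpar, if_neg (by omega)]
    exact (hlink i (b w)).1 hzero
end

section
/- Let λ be a k-strict partition with characteristic index χ = (χ_1,...,χ_{n-k}) (defined via the associated k-Grassmannian signed permutation w_λ^{(k)} = v_1⋯v_k | ζ̄_1⋯ζ̄_s u_1⋯u_{n-k-s} by χ_j = ζ_j − 1 for j ≤ s and χ_j = −u_{j−s} for j > s). Then for 1 ≤ i < j ≤ n−k: χ_i + χ_j ≥ 0 if and only if λ_i + λ_j > 2k + j − i. -/
/-!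
Statement 12 (Lemma 3.3 of Ikeda–Matsumura): let `λ` be a `k`-strict partition with
characteristic index `χ = (χ_1,…,χ_{n-k})`.  Then for `1 ≤ i < j ≤ n−k`:
`χ_i + χ_j ≥ 0` if and only if `λ_i + λ_j > 2k + j − i`.

Formalization.  We encode the `k`-Grassmannian signed permutation
`w_λ^{(k)} = v_1⋯v_k | ζ̄_1⋯ζ̄_s u_1⋯u_{n-k-s}` concretely as a function `w : ℕ → ℤ` whose
values at `0, …, n-1` are the one-line entries (`w̄ = -w`), with the shape conditions
`0 < v_1 < ⋯ < v_k`, `ζ̄_1 < ⋯ < ζ̄_s < 0 < u_1 < ⋯ < u_{n-k-s}` and the requirement that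
the absolute values of the entries are a permutation of `1, …, n`.  The partition `λ` and the
characteristic index `χ` are recovered from `w` by `λ_j = ζ_j + k` (for `j ≤ s`),
`λ_j = #{p ≤ k : v_p > u_{j-s}}` (for `j > s`), `χ_j = ζ_j − 1` (for `j ≤ s`) and
`χ_j = −u_{j-s}` (for `j > s`); this is the inverse of the bijection `λ ↦ w_λ^{(k)}` of
Buch–Kresch–Tamvakis used in the paper. -/

open Finset

/-- The one-line entries of a `k`-Grassmannian element of `W_n`: positions `0,…,k-1` carry the
increasing positive entries `v_1 < ⋯ < v_k`, positions `k,…,k+s-1` the increasing negative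
entries `ζ̄_1 < ⋯ < ζ̄_s`, positions `k+s,…,n-1` the increasing positive entries
`u_1 < ⋯ < u_{n-k-s}`; the absolute values of the entries form a permutation of `1,…,n`. -/
def GrassShape (n k s : ℕ) (w : ℕ → ℤ) : Prop :=
  k + s ≤ n ∧
  (∀ i, i < k → 0 < w i) ∧
  (∀ i, k ≤ i → i < k + s → w i < 0) ∧
  (∀ i, k + s ≤ i → i < n → 0 < w i) ∧
  (∀ i j, i < j → j < k → w i < w j) ∧
  (∀ i j, k ≤ i → i < j → j < k + s → w i < w j) ∧
  (∀ i j, k + s ≤ i → i < j → j < n → w i < w j) ∧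
  (∀ i j, i < n → j < n → (w i).natAbs = (w j).natAbs → i = j) ∧
  (∀ i, i < n → 1 ≤ (w i).natAbs ∧ (w i).natAbs ≤ n)

/-- The part `λ_j` (for `1 ≤ j ≤ n-k`) of the `k`-strict partition corresponding to the
`k`-Grassmannian element `w`: `λ_j = ζ_j + k` for `j ≤ s` and `λ_j = #{p : v_p > u_{j-s}}`
for `j > s`. -/
def lamOf (k s : ℕ) (w : ℕ → ℤ) (j : ℕ) : ℤ :=
  if j ≤ s then -(w (k + j - 1)) + k
  else (((range k).filter (fun p => w (k + j - 1) < w p)).card : ℤ)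

/-- The entry `χ_j` (for `1 ≤ j ≤ n-k`) of the characteristic index of `λ`:
`χ_j = ζ_j − 1` for `j ≤ s` and `χ_j = −u_{j-s}` for `j > s`. -/
def chiOf (k s : ℕ) (w : ℕ → ℤ) (j : ℕ) : ℤ :=
  if j ≤ s then -(w (k + j - 1)) - 1
  else -(w (k + j - 1))

private lemma gap_aux (w : ℕ → ℤ) (lo hi : ℕ)
    (h : ∀ p q, lo ≤ p → p < q → q < hi → w p < w q)
    (a : ℕ) (ha : lo ≤ a) :
    ∀ d, a + d < hi → w a + d ≤ w (a + d) := by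
  intro d
  induction d with
  | zero => intro _; simp
  | succ d ih =>
    intro hb
    have h1 : w (a + d) < w (a + (d + 1)) := h _ _ (by omega) (by omega) hb
    have h2 : w a + (d : ℤ) ≤ w (a + d) := ih (by omega)
    push_cast
    omega

private lemma count_eq (n N : ℕ) (w : ℕ → ℤ)
    (h8 : ∀ i j, i < n → j < n → (w i).natAbs = (w j).natAbs → i = j)
    (h9 : ∀ i, i < n → 1 ≤ (w i).natAbs ∧ (w i).natAbs ≤ n)
    (hNn : N ≤ n) :
    ((range n).filter (fun p => (w p).natAbs ≤ N)).card = N := by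
  have hinj : Set.InjOn (fun p => (w p).natAbs) (range n) :=
    fun p hp q hq h => h8 p q (mem_range.mp hp) (mem_range.mp hq) h
  have himg : (range n).image (fun p => (w p).natAbs) = Icc 1 n := by
    apply eq_of_subset_of_card_le
    · intro x hx
      simp only [mem_image, mem_range] at hx
      obtain ⟨p, hp, rfl⟩ := hx
      exact mem_Icc.mpr (h9 p hp)
    · rw [Nat.card_Icc, card_image_of_injOn hinj, card_range]
      omega
  have key := filter_image (s := range n) (f := fun p => (w p).natAbs)
    (p := fun x => x ≤ N)
  rw [himg] at key
  have hcard : ((Icc 1 n).filter (fun x => x ≤ N)).card = N := by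
    have heq : (Icc 1 n).filter (fun x => x ≤ N) = Icc 1 N := by
      ext x; simp only [mem_filter, mem_Icc]; omega
    rw [heq, Nat.card_Icc]
    omega
  rw [key] at hcard
  rwa [card_image_of_injOn
    (hinj.mono (Finset.coe_subset.mpr (filter_subset _ _)))] at hcard

/-- Lemma 3.3: `χ_i + χ_j ≥ 0 ↔ λ_i + λ_j > 2k + j − i` for `1 ≤ i < j ≤ n − k`. -/
theorem chi_add_chi_nonneg_iff (n k s : ℕ) (w : ℕ → ℤ) (hw : GrassShape n k s w)
    (i j : ℕ) (hi : 1 ≤ i) (hij : i < j) (hj : j ≤ n - k) :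
    0 ≤ chiOf k s w i + chiOf k s w j ↔
      2 * (k : ℤ) + j - i < lamOf k s w i + lamOf k s w j := by
  obtain ⟨h1, h2, h3, h4, h5, h6, h7, h8, h9⟩ := hw
  have hkn : k ≤ n := by omega
  have hjn : k + j ≤ n := by omega
  by_cases hjs : j ≤ s
  · -- Case 1 : i < j ≤ s
    have his : i ≤ s := by omega
    simp only [chiOf, lamOf, if_pos his, if_pos hjs]
    have hg := gap_aux w k (k + s) h6 (k + i - 1) (by omega) (j - i) (by omega)
    have he : k + i - 1 + (j - i) = k + j - 1 := by omega
    rw [he] at hg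
    have hwb : w (k + j - 1) < 0 := h3 _ (by omega) (by omega)
    omega
  · by_cases his : i ≤ s
    · -- Case 2 : i ≤ s < j
      simp only [chiOf, lamOf, if_pos his, if_neg hjs]
      set a := k + i - 1 with ha_def
      set b := k + j - 1 with hb_def
      have ha1 : k ≤ a := by omega
      have ha2 : a < k + s := by omega
      have hb1 : k + s ≤ b := by omega
      have hb2 : b < n := by omega
      have hu : 0 < w b := h4 b hb1 hb2
      have hza : w a < 0 := h3 a ha1 ha2
      set N := (w b).natAbs with hN_def
      have hNn : N ≤ n := (h9 b hb2).2
      set t := ((Ico k (k + s)).filter (fun p => (w p).natAbs ≤ N)).card with ht_def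
      set c := ((range k).filter (fun p => w b < w p)).card with hc_def
      -- total count
      have htot : ((range n).filter (fun p => (w p).natAbs ≤ N)).card = N :=
        count_eq n N w h8 h9 hNn
      -- split into three blocks
      have hd1 : Disjoint ((Ico 0 k).filter (fun p => (w p).natAbs ≤ N))
          ((Ico k (k + s)).filter (fun p => (w p).natAbs ≤ N)) :=
        disjoint_filter_filter (Ico_disjoint_Ico_consecutive 0 k (k + s))
      have hd2 : Disjoint (((Ico 0 k) ∪ Ico k (k + s)).filter (fun p => (w p).natAbs ≤ N))
          ((Ico (k + s) n).filter (fun p => (w p).natAbs ≤ N)) := by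
        refine disjoint_filter_filter ?_
        rw [Ico_union_Ico_eq_Ico (Nat.zero_le k) (by omega : k ≤ k + s)]
        exact Ico_disjoint_Ico_consecutive 0 (k + s) n
      rw [filter_union] at hd2
      have hsplit : ((range n).filter (fun p => (w p).natAbs ≤ N)).card
          = ((Ico 0 k).filter (fun p => (w p).natAbs ≤ N)).card + t
            + ((Ico (k + s) n).filter (fun p => (w p).natAbs ≤ N)).card := by
        rw [ht_def, range_eq_Ico,
          ← Ico_union_Ico_eq_Ico (Nat.zero_le (k + s)) h1,
          ← Ico_union_Ico_eq_Ico (Nat.zero_le k) (by omega : k ≤ k + s),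
          filter_union, filter_union, card_union_of_disjoint hd2,
          card_union_of_disjoint hd1]
      -- first block
      have hA1 : ((Ico 0 k).filter (fun p => (w p).natAbs ≤ N)).card + c = k := by
        have hneg : (range k).filter (fun p => w b < w p)
            = (range k).filter (fun p => ¬ ((w p).natAbs ≤ N)) := by
          refine filter_congr fun p hp => ?_
          have h0p := h2 p (mem_range.mp hp)
          omega
        rw [hc_def, hneg, ← range_eq_Ico]
        have := card_filter_add_card_filter_not
          (s := range k) (p := fun p => (w p).natAbs ≤ N)
        simpa using this
      -- third block
      have hA3 : (Ico (k + s) n).filter (fun p => (w p).natAbs ≤ N) = Ico (k + s) (b + 1) := by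
        ext p
        simp only [mem_filter, mem_Ico]
        constructor
        · rintro ⟨⟨hp1, hp2⟩, hp3⟩
          refine ⟨hp1, ?_⟩
          by_contra hcon
          have hbp : b < p := by omega
          have hwl := h7 b p hb1 hbp hp2
          have h0p := h4 p hp1 hp2
          omega
        · rintro ⟨hp1, hp2⟩
          have hpn : p < n := by omega
          have h0p := h4 p hp1 hpn
          refine ⟨⟨hp1, hpn⟩, ?_⟩
          rcases Nat.lt_or_ge p b with hpb | hpb
          · have := h7 p b hp1 hpb hb2; omega
          · have hpb' : p = b := by omega
            subst hpb'; omega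
      have hA3c : ((Ico (k + s) n).filter (fun p => (w p).natAbs ≤ N)).card = j - s := by
        rw [hA3, Nat.card_Ico]; omega
      have hcount : N + c = k + t + (j - s) := by omega
      -- pointwise description of the middle block predicate
      have hblock : ∀ p, k ≤ p → p < k + s → ((w p).natAbs ≤ N ↔ -w p < w b) := by
        intro p hp1 hp2
        have hwp := h3 p hp1 hp2
        have hnab : (w p).natAbs ≠ N := by
          intro h
          have : p = b := h8 p b (by omega) hb2 (h.trans hN_def)
          omega
        omega
      have htle : t ≤ s := by
        have := card_filter_le (Ico k (k + s)) (fun p => (w p).natAbs ≤ N)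
        rw [Nat.card_Ico] at this
        omega
      have hsub1 : ∀ q0, k ≤ q0 → q0 < k + s → -w q0 < w b → k + s - q0 ≤ t := by
        intro q0 hq1 hq2 hq3
        have hss : Ico q0 (k + s) ⊆ (Ico k (k + s)).filter (fun p => (w p).natAbs ≤ N) := by
          intro p hp
          rw [mem_Ico] at hp
          rw [mem_filter, mem_Ico]
          have hle : w q0 ≤ w p := by
            rcases Nat.eq_or_lt_of_le hp.1 with h | h
            · rw [h]
            · exact le_of_lt (h6 q0 p hq1 h hp.2)
          exact ⟨⟨by omega, hp.2⟩, (hblock p (by omega) hp.2).mpr (by omega)⟩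
        have := card_le_card hss
        rw [Nat.card_Ico] at this
        omega
      have hsub2 : ∀ q0, k ≤ q0 → q0 < k + s → w b < -w q0 → t ≤ k + s - q0 - 1 := by
        intro q0 hq1 hq2 hq3
        have hss : (Ico k (k + s)).filter (fun p => (w p).natAbs ≤ N) ⊆ Ico (q0 + 1) (k + s) := by
          intro p hp
          rw [mem_filter, mem_Ico] at hp
          rw [mem_Ico]
          refine ⟨?_, hp.1.2⟩
          by_contra hcon
          have hpq : p ≤ q0 := by omega
          have hge : w p ≤ w q0 := by
            rcases Nat.eq_or_lt_of_le hpq with h | h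
            · rw [h]
            · exact le_of_lt (h6 p q0 hp.1.1 h hq2)
          have := (hblock p hp.1.1 hp.1.2).mp hp.2
          omega
        have := card_le_card hss
        rw [Nat.card_Ico] at this
        omega
      have hgap := gap_aux w k (k + s) h6
      constructor
      · intro hle
        have huz : w b < -w a := by omega
        have hta : t ≤ k + s - a - 1 := hsub2 a ha1 ha2 huz
        set q0 := k + s - t - 1 with hq0_def
        have hq01 : k ≤ q0 := by omega
        have hq02 : q0 < k + s := by omega
        have hq0a : a ≤ q0 := by omega
        have hwq0 : w q0 < 0 := h3 q0 hq01 hq02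
        have hne0 : (w q0).natAbs ≠ N := by
          intro h
          have : q0 = b := h8 q0 b (by omega) hb2 (h.trans hN_def)
          omega
        have hq0big : w b < -w q0 := by
          by_contra hcon
          push_neg at hcon
          have := hsub1 q0 hq01 hq02 (by omega)
          omega
        have hg := hgap a ha1 (q0 - a) (by omega)
        have hqa : a + (q0 - a) = q0 := by omega
        rw [hqa] at hg
        omega
      · intro hlt
        by_contra hcon
        have hnea : (w a).natAbs ≠ N := by
          intro h
          have : a = b := h8 a b (by omega) hb2 (h.trans hN_def)
          omega
        have hz_lt : -w a < w b := by omega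
        have hta : k + s - a ≤ t := hsub1 a ha1 ha2 hz_lt
        set q0 := k + s - t with hq0_def
        have hq01 : k ≤ q0 := by omega
        have hq02 : q0 < k + s := by omega
        have hq0a : q0 ≤ a := by omega
        have hwq0 : w q0 < 0 := h3 q0 hq01 hq02
        have hne0 : (w q0).natAbs ≠ N := by
          intro h
          have : q0 = b := h8 q0 b (by omega) hb2 (h.trans hN_def)
          omega
        have hq0small : -w q0 < w b := by
          by_contra hcon2
          push_neg at hcon2
          have := hsub2 q0 hq01 hq02 (by omega)
          omega
        have hg := hgap q0 hq01 (a - q0) (by omega)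
        have hqa : q0 + (a - q0) = a := by omega
        rw [hqa] at hg
        omega
    · -- Case 3 : s < i < j
      simp only [chiOf, lamOf, if_neg his, if_neg hjs]
      have hwa : 0 < w (k + i - 1) := h4 _ (by omega) (by omega)
      have hwb : 0 < w (k + j - 1) := h4 _ (by omega) (by omega)
      have hc1 : ((range k).filter (fun p => w (k + i - 1) < w p)).card ≤ k := by
        have := card_filter_le (range k) (fun p => w (k + i - 1) < w p)
        rw [card_range] at this; exact this
      have hc2 : ((range k).filter (fun p => w (k + j - 1) < w p)).card ≤ k := by
        have := card_filter_le (range k) (fun p => w (k + j - 1) < w p)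
        rw [card_range] at this; exact this
      omega
end

section
/- Let λ ∈ 𝒫_n^{(k)} be a k-strict partition with characteristic index χ. Then for 1 ≤ j ≤ ℓ(λ), the Schubert position satisfies p_j(λ) = n − χ_j, where p_j(λ) = n + k + j − λ_j − #{i : i < j, λ_i + λ_j > 2k + j − i}. -/
/-!
Statement 13 (equation (3.5) of Ikeda–Matsumura): let `λ ∈ 𝒫_n^{(k)}` be a `k`-strict
partition with characteristic index `χ`.  Then for `1 ≤ j ≤ ℓ(λ)` the Schubert position
satisfies `p_j(λ) = n − χ_j`, where
`p_j(λ) = n + k + j − λ_j − #{i : i < j, λ_i + λ_j > 2k + j − i}`.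

Formalization.  As in the paper, we encode the `k`-Grassmannian signed permutation
`w_λ^{(k)} = v_1⋯v_k | ζ̄_1⋯ζ̄_s u_1⋯u_{n-k-s}` concretely as a function `w : ℕ → ℤ` with the
appropriate shape conditions, and recover `λ` and `χ` from `w` via `λ_j = ζ_j + k`,
`λ_j = #{p : v_p > u_{j-s}}`, `χ_j = ζ_j − 1`, `χ_j = −u_{j-s}`.  The condition `j ≤ ℓ(λ)`
(`ℓ(λ)` = number of nonzero parts) is expressed by `λ_j ≠ 0`. -/

open Finset

lemma gap_lemma (w : ℕ → ℤ) (a b : ℕ)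
    (h : ∀ p q, a ≤ p → p < q → q < b → w p < w q) :
    ∀ q p, a ≤ p → p ≤ q → q < b → w p + ((q : ℤ) - p) ≤ w q := by
  intro q
  induction q with
  | zero =>
      intro p hap hpq hqb
      have hp0 : p = 0 := Nat.le_zero.mp hpq
      subst hp0; simp
  | succ m ih =>
      intro p hap hpq hqb
      rcases eq_or_lt_of_le hpq with he | hl
      · subst he; simp
      · have hpm : p ≤ m := Nat.lt_succ_iff.mp hl
        have h1 := ih p hap hpm (by omega)
        have h2 := h m (m + 1) (le_trans hap hpm) (Nat.lt_succ_self m) hqb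
        push_cast at h1 ⊢
        omega

lemma downset_eq_Ico (a b : ℕ) (P : ℕ → Prop) [DecidablePred P]
    (hdc : ∀ p q, a ≤ p → p ≤ q → q ≤ b → P q → P p) :
    (Icc a b).filter P = Ico a (a + ((Icc a b).filter P).card) := by
  set S := (Icc a b).filter P with hS
  ext p
  simp only [mem_Ico]
  constructor
  · intro hp
    obtain ⟨hab, hP⟩ := mem_filter.mp hp
    obtain ⟨hap, hpb⟩ := mem_Icc.mp hab
    refine ⟨hap, ?_⟩
    have hsub : Icc a p ⊆ S := by
      intro x hx
      obtain ⟨hax, hxp⟩ := mem_Icc.mp hx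
      exact mem_filter.mpr ⟨mem_Icc.mpr ⟨hax, le_trans hxp hpb⟩, hdc x p hax hxp hpb hP⟩
    have hc := Finset.card_le_card hsub
    rw [Nat.card_Icc] at hc
    omega
  · rintro ⟨hap, hlt⟩
    by_contra hns
    have hsub : S ⊆ Ico a p := by
      intro x hx
      obtain ⟨hab, hP⟩ := mem_filter.mp hx
      obtain ⟨hax, hxb⟩ := mem_Icc.mp hab
      refine mem_Ico.mpr ⟨hax, ?_⟩
      by_contra hpx
      push_neg at hpx
      exact hns (mem_filter.mpr ⟨mem_Icc.mpr ⟨hap, le_trans hpx hxb⟩,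
        hdc p x hap hpx hxb hP⟩)
    have hc := Finset.card_le_card hsub
    rw [Nat.card_Ico] at hc
    omega

lemma count_abs_lt (n : ℕ) (w : ℕ → ℤ)
    (hinj : ∀ i j, i < n → j < n → (w i).natAbs = (w j).natAbs → i = j)
    (hrange : ∀ i, i < n → 1 ≤ (w i).natAbs ∧ (w i).natAbs ≤ n)
    (U : ℕ) (hU1 : 1 ≤ U) (hUn : U ≤ n) :
    ((range n).filter (fun p => (w p).natAbs < U)).card = U - 1 := by
  have hinjOn : Set.InjOn (fun p => (w p).natAbs) (range n) := by
    intro i hi j hj hij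
    exact hinj i j (mem_range.mp hi) (mem_range.mp hj) hij
  have himg : (range n).image (fun p => (w p).natAbs) = Icc 1 n := by
    apply Finset.eq_of_subset_of_card_le
    · intro m hm
      simp only [mem_image, mem_range] at hm
      obtain ⟨p, hp, rfl⟩ := hm
      exact mem_Icc.mpr (hrange p hp)
    · rw [Nat.card_Icc, Finset.card_image_of_injOn hinjOn, card_range]
      omega
  have key : ((Icc 1 n).filter (fun m => m < U)).card
      = ((range n).filter (fun p => (w p).natAbs < U)).card := by
    rw [← himg, Finset.filter_image,
      Finset.card_image_of_injOn (hinjOn.mono (Finset.coe_subset.mpr (Finset.filter_subset _ _)))]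
  have h1 : (Icc 1 n).filter (fun m => m < U) = Ico 1 U := by
    ext m; simp only [mem_filter, mem_Icc, mem_Ico]; omega
  rw [← key, h1, Nat.card_Ico]


/-- `p_j(λ) = n + k + j − λ_j − #{i : i < j, λ_i + λ_j > 2k + j − i}`. -/
noncomputable def pOf (n k s : ℕ) (w : ℕ → ℤ) (j : ℕ) : ℤ :=
  (n : ℤ) + k + j - lamOf k s w j -
    (((Icc 1 (j - 1)).filter
        (fun i => 2 * (k : ℤ) + j - i < lamOf k s w i + lamOf k s w j)).card : ℤ)

/-- Equation (3.5): `p_j(λ) = n − χ_j` for `1 ≤ j ≤ ℓ(λ)`. -/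
theorem schubert_position_eq (n k s : ℕ) (w : ℕ → ℤ) (hw : GrassShape n k s w)
    (j : ℕ) (hj1 : 1 ≤ j) (hj2 : j ≤ n - k) (hlam : lamOf k s w j ≠ 0) :
    pOf n k s w j = (n : ℤ) - chiOf k s w j := by
  obtain ⟨hks, hpos1, hneg, hpos2, hmono1, hmono2, hmono3, hinj, hrange⟩ := hw
  by_cases hjs : j ≤ s
  · have hall : (Icc 1 (j-1)).filter
        (fun i => 2 * (k : ℤ) + j - i < lamOf k s w i + lamOf k s w j) = Icc 1 (j-1) := by
      apply Finset.filter_true_of_mem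
      intro i hi
      obtain ⟨hi1, hi2⟩ := mem_Icc.mp hi
      have his : i ≤ s := by omega
      simp only [lamOf, if_pos his, if_pos hjs]
      have hg := gap_lemma w k (k+s) hmono2 (k+j-1) (k+i-1) (by omega) (by omega) (by omega)
      have hneg_j : w (k+j-1) < 0 := hneg _ (by omega) (by omega)
      push_cast at hg ⊢
      omega
    rw [pOf, hall, chiOf, if_pos hjs, lamOf, if_pos hjs, Nat.card_Icc]
    have hneg_j : w (k+j-1) < 0 := hneg _ (by omega) (by omega)
    push_cast
    omega
  · push_neg at hjs
    have hq2 : k + j - 1 < n := by omega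
    have hq1 : k + s ≤ k + j - 1 := by omega
    have hwq : 0 < w (k+j-1) := hpos2 _ hq1 hq2
    set U := (w (k+j-1)).natAbs with hUdef
    have hUw : (U : ℤ) = w (k+j-1) := Int.natAbs_of_nonneg hwq.le
    have hU1 : 1 ≤ U := (hrange _ hq2).1
    have hUn : U ≤ n := (hrange _ hq2).2
    -- total count
    have htot := count_abs_lt n w hinj hrange U hU1 hUn
    -- splitting
    have hcard : ((range n).filter (fun p => (w p).natAbs < U)).card
        = ((Ico 0 k).filter (fun p => (w p).natAbs < U)).card
        + ((Ico k (k+s)).filter (fun p => (w p).natAbs < U)).card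
        + ((Ico (k+s) n).filter (fun p => (w p).natAbs < U)).card := by
      have hd1 : Disjoint ((Ico 0 k).filter (fun p => (w p).natAbs < U))
          ((Ico k (k+s)).filter (fun p => (w p).natAbs < U)) :=
        disjoint_filter_filter (Ico_disjoint_Ico_consecutive 0 k (k+s))
      have hd2 : Disjoint ((Ico 0 k).filter (fun p => (w p).natAbs < U)
            ∪ (Ico k (k+s)).filter (fun p => (w p).natAbs < U))
          ((Ico (k+s) n).filter (fun p => (w p).natAbs < U)) := by
        rw [← filter_union, Ico_union_Ico_eq_Ico (Nat.zero_le k) (Nat.le_add_right k s)]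
        exact disjoint_filter_filter (Ico_disjoint_Ico_consecutive 0 (k+s) n)
      rw [range_eq_Ico,
          ← Ico_union_Ico_eq_Ico (Nat.zero_le (k+s)) hks,
          ← Ico_union_Ico_eq_Ico (Nat.zero_le k) (Nat.le_add_right k s),
          filter_union, filter_union,
          card_union_of_disjoint hd2, card_union_of_disjoint hd1]
    -- piece A
    set lj := ((range k).filter (fun p => w (k + j - 1) < w p)).card with hljdef
    have hljlam : lamOf k s w j = (lj : ℤ) := by
      rw [lamOf, if_neg (by omega)]
    have hApiece : (Ico 0 k).filter (fun p => (w p).natAbs < U)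
        = (range k).filter (fun p => w p < w (k+j-1)) := by
      rw [← range_eq_Ico]
      apply filter_congr
      intro p hp
      have hpk := mem_range.mp hp
      have hwp : 0 < w p := hpos1 p hpk
      have hc : ((w p).natAbs : ℤ) = w p := Int.natAbs_of_nonneg hwp.le
      omega
    have hAsum : ((range k).filter (fun p => w p < w (k+j-1))).card + lj = k := by
      rw [hljdef]
      have hcongr : (range k).filter (fun p => w (k+j-1) < w p)
          = (range k).filter (fun p => ¬ (w p < w (k+j-1))) := by
        apply filter_congr
        intro p hp
        have hpk := mem_range.mp hp
        have hpn : p < n := by omega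
        have hne : w p ≠ w (k+j-1) := by
          intro hEq
          have := hinj p (k+j-1) hpn hq2 (by rw [hEq])
          omega
        constructor <;> intro <;> omega
      have hpn2 := Finset.card_filter_add_card_filter_not
        (s := range k) (fun p => w p < w (k+j-1))
      rw [card_range] at hpn2
      rw [hcongr]
      exact hpn2
    -- piece C
    have hCpiece : (Ico (k+s) n).filter (fun p => (w p).natAbs < U) = Ico (k+s) (k+j-1) := by
      ext p
      simp only [mem_filter, mem_Ico]
      constructor
      · rintro ⟨⟨h1, h2⟩, h3⟩
        refine ⟨h1, ?_⟩
        by_contra hqp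
        push_neg at hqp
        rcases eq_or_lt_of_le hqp with he | hlt
        · rw [← he] at h3; omega
        · have hlt2 := hmono3 (k+j-1) p hq1 hlt h2
          have hwp : 0 < w p := hpos2 p h1 h2
          have e1 := Int.natAbs_eq (w p)
          omega
      · rintro ⟨h1, h2⟩
        have hpn : p < n := by omega
        have hwp := hpos2 p h1 hpn
        have hlt := hmono3 p (k+j-1) h1 h2 hq2
        have e1 := Int.natAbs_eq (w p)
        exact ⟨⟨h1, hpn⟩, by omega⟩
    -- piece B
    have hBsum : ((Ico k (k+s)).filter (fun p => (w p).natAbs < U)).card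
        + ((Ico k (k+s)).filter (fun p => U < (w p).natAbs)).card = s := by
      have hcongr : (Ico k (k+s)).filter (fun p => U < (w p).natAbs)
          = (Ico k (k+s)).filter (fun p => ¬ ((w p).natAbs < U)) := by
        apply filter_congr
        intro p hp
        obtain ⟨h1, h2⟩ := mem_Ico.mp hp
        have hpn : p < n := by omega
        have hne : (w p).natAbs ≠ U := by
          intro hEq
          have := hinj p (k+j-1) hpn hq2 hEq
          omega
        constructor <;> intro <;> omega
      rw [hcongr]
      have := Finset.card_filter_add_card_filter_not
        (s := Ico k (k+s)) (fun p => (w p).natAbs < U)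
      rw [Nat.card_Ico] at this
      omega
    -- identify the second piece with S1 over Icc 1 s
    set P1 : ℕ → Prop := fun i => (U : ℤ) < -(w (k+i-1)) with hP1def
    have hbij : ((Ico k (k+s)).filter (fun p => U < (w p).natAbs)).card
        = ((Icc 1 s).filter P1).card := by
      apply Finset.card_nbij' (fun p => p - k + 1) (fun i => k + i - 1)
      · intro p hp
        beta_reduce
        obtain ⟨hm, h3⟩ := mem_filter.mp hp
        obtain ⟨h1, h2⟩ := mem_Ico.mp hm
        have hwp : w p < 0 := hneg p h1 h2
        have e1 := Int.natAbs_eq (w p)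
        have hidx : k + (p - k + 1) - 1 = p := by omega
        refine mem_filter.mpr ⟨mem_Icc.mpr ⟨by omega, by omega⟩, ?_⟩
        show (U : ℤ) < -(w (k + (p - k + 1) - 1))
        rw [hidx]
        omega
      · intro i hi
        beta_reduce
        obtain ⟨hm, hPi⟩ := mem_filter.mp hi
        obtain ⟨h1, h2⟩ := mem_Icc.mp hm
        have h1' : k ≤ k + i - 1 := by omega
        have h2' : k + i - 1 < k + s := by omega
        have hwp : w (k+i-1) < 0 := hneg _ h1' h2'
        have e1 := Int.natAbs_eq (w (k+i-1))
        have hPi' : (U : ℤ) < -(w (k+i-1)) := hPi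
        refine mem_filter.mpr ⟨mem_Ico.mpr ⟨h1', h2'⟩, by omega⟩
      · intro p hp
        beta_reduce
        obtain ⟨h1, h2⟩ := mem_Ico.mp (mem_of_mem_filter p hp)
        omega
      · intro i hi
        beta_reduce
        obtain ⟨h1, h2⟩ := mem_Icc.mp (mem_of_mem_filter i hi)
        omega
    set D := ((Icc 1 s).filter P1).card with hDdef
    -- main numeric identity
    have hljk : lj ≤ k := by
      rw [hljdef]; exact le_trans (card_filter_le _ _) (by rw [card_range])
    have hkey : U + lj + D = k + j := by
      rw [hcard, hApiece, hCpiece, Nat.card_Ico] at htot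
      omega
    have hDj : D ≤ j - 1 := by omega
    have hDs : D ≤ s := by
      rw [hDdef]
      exact le_trans (card_filter_le _ _) (by rw [Nat.card_Icc]; omega)
    -- downset structure of S1
    have hS1 : (Icc 1 s).filter P1 = Ico 1 (1 + D) := by
      rw [hDdef]
      apply downset_eq_Ico
      intro p q h1 h2 h3 hPq
      rcases eq_or_lt_of_le h2 with he | hlt
      · rwa [he]
      · have hPq' : (U : ℤ) < -(w (k+q-1)) := hPq
        show (U : ℤ) < -(w (k+p-1))
        have := hmono2 (k+p-1) (k+q-1) (by omega) (by omega) (by omega)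
        omega
    -- the filter in pOf equals Ico 1 (1+D)
    have hS2 : (Icc 1 (j-1)).filter
        (fun i => 2 * (k : ℤ) + j - i < lamOf k s w i + lamOf k s w j) = Ico 1 (1 + D) := by
      ext i
      simp only [mem_filter, mem_Icc, mem_Ico]
      constructor
      · rintro ⟨⟨hi1, hi2⟩, hcond⟩
        refine ⟨hi1, ?_⟩
        by_contra hiD
        push_neg at hiD
        have his : i ≤ s := by
          by_contra hsi
          push_neg at hsi
          have hlami : lamOf k s w i ≤ k := by
            rw [lamOf, if_neg (by omega)]
            have : (((range k).filter (fun p => w (k + i - 1) < w p)).card) ≤ k :=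
              le_trans (card_filter_le _ _) (by rw [card_range])
            exact_mod_cast this
          rw [hljlam] at hcond
          have hik : i < j := by omega
          have : (lj : ℤ) ≤ k := by exact_mod_cast hljk
          push_cast at hcond
          omega
        have hDs' : D < s := by omega
        have hnot : ¬ P1 (D + 1) := by
          intro hx
          have hmem : (D+1) ∈ (Icc 1 s).filter P1 :=
            mem_filter.mpr ⟨mem_Icc.mpr ⟨by omega, by omega⟩, hx⟩
          rw [hS1, mem_Ico] at hmem
          omega
        have hnot' : ¬ ((U : ℤ) < -(w (k+(D+1)-1))) := hnot
        push_neg at hnot'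
        clear hnot
        have hne : -(w (k + (D+1) - 1)) ≠ (U : ℤ) := by
          intro hx
          have hwn : w (k + (D+1) - 1) < 0 := hneg _ (by omega) (by omega)
          have e1 := Int.natAbs_eq (w (k + (D+1) - 1))
          have habs : (w (k + (D+1) - 1)).natAbs = U := by omega
          have := hinj _ _ (by omega) hq2 habs
          omega
        have hg := gap_lemma w k (k+s) hmono2 (k+i-1) (k+(D+1)-1) (by omega) (by omega) (by omega)
        rw [lamOf, if_pos his, hljlam] at hcond
        push_cast at hcond hg ⊢
        omega
      · rintro ⟨hi1, hiD⟩
        have hD1 : 1 ≤ D := by omega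
        have hDmem : D ∈ (Icc 1 s).filter P1 := by
          rw [hS1]; exact mem_Ico.mpr ⟨hD1, by omega⟩
        have hPD : (U : ℤ) < -(w (k+D-1)) := (mem_filter.mp hDmem).2
        have hg := gap_lemma w k (k+s) hmono2 (k+D-1) (k+i-1) (by omega) (by omega) (by omega)
        refine ⟨⟨hi1, by omega⟩, ?_⟩
        rw [lamOf, if_pos (by omega : i ≤ s), hljlam]
        push_cast at hg ⊢
        omega
    rw [pOf, hS2, chiOf, if_neg (by omega), hljlam, Nat.card_Ico]
    push_cast
    omega
end
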